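/- No filiform Lie algebra of dimension ≥ 6 admits an integrable complex structure. (A filiform Lie algebra is a nilpotent Lie algebra g with nil-index s(g) = dim g - 1.) -/

import Mathlib

/-- No filiform Lie algebra of dimension `≥ 6` admits an integrable complex structure.
Filiform means nilpotent with nil-index `s(g) = dim g - 1`, i.e.
`g^{dim g - 1} = LieModule.lowerCentralSeries ℝ g g (dim g - 2) ≠ ⊥`. -/
theorem filiform_no_complex_structure
    {g : Type*} [LieRing g] [LieAlgebra ℝ g] [FiniteDimensional ℝ g]
    [LieModule.IsNilpotent g g]
    (hdim : 6 ≤ Module.finrank ℝ g)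
    (hfil : LieModule.lowerCentralSeries ℝ g g (Module.finrank ℝ g - 2) ≠ ⊥) :
    ¬∃ J : g →ₗ[ℝ] g,
      (∀ X : g, J (J X) = -X) ∧
      (∀ X Y : g, ⁅J X, J Y⁆ = ⁅X, Y⁆ + J ⁅J X, Y⁆ + J ⁅X, J Y⁆) := by
  rintro ⟨J, hJ2, hNij⟩
  set n := Module.finrank ℝ g with hn
  -- the lower central series, at the level of submodules
  set D : ℕ → Submodule ℝ g := fun k => (LieModule.lowerCentralSeries ℝ g g k).toSubmodule
    with hD
  have hmemD : ∀ (k : ℕ) (x : g), x ∈ D k ↔ x ∈ LieModule.lowerCentralSeries ℝ g g k :=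
    fun k x => Iff.rfl
  -- if the series stabilizes at step k, it is ⊥ at step k
  have hstab : ∀ k : ℕ,
      LieModule.lowerCentralSeries ℝ g g k ≤ LieModule.lowerCentralSeries ℝ g g (k + 1) →
      LieModule.lowerCentralSeries ℝ g g k = ⊥ := by
    intro k h
    have heqk : LieModule.lowerCentralSeries ℝ g g (k + 1) = LieModule.lowerCentralSeries ℝ g g k :=
      le_antisymm (LieModule.antitone_lowerCentralSeries ℝ g g (Nat.le_succ k)) h
    have heq : ∀ j : ℕ,
        LieModule.lowerCentralSeries ℝ g g (k + j) = LieModule.lowerCentralSeries ℝ g g k := by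
      intro j
      induction j with
      | zero => rfl
      | succ j ih =>
        rw [show k + (j + 1) = (k + j) + 1 from rfl, LieModule.lowerCentralSeries_succ, ih,
          ← LieModule.lowerCentralSeries_succ, heqk]
    obtain ⟨N, hN⟩ := LieModule.IsNilpotent.nilpotent ℝ g g
    have h2 : LieModule.lowerCentralSeries ℝ g g (k + N) ≤ LieModule.lowerCentralSeries ℝ g g N :=
      LieModule.antitone_lowerCentralSeries ℝ g g (Nat.le_add_left N k)
    rw [heq N, hN] at h2
    exact le_bot_iff.mp h2
  have hanti : ∀ {a b : ℕ}, a ≤ b →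
      LieModule.lowerCentralSeries ℝ g g b ≤ LieModule.lowerCentralSeries ℝ g g a :=
    fun {a b} h => LieModule.antitone_lowerCentralSeries ℝ g g h
  have hDanti : ∀ {a b : ℕ}, a ≤ b → D b ≤ D a := by
    intro a b h
    exact (LieSubmodule.toSubmodule_le_toSubmodule _ _).mpr (hanti h)
  have hne : ∀ k, k ≤ n - 2 → LieModule.lowerCentralSeries ℝ g g k ≠ ⊥ := by
    intro k hk hbot
    exact hfil (le_bot_iff.mp (hbot ▸ hanti hk))
  -- bracket membership
  have hbr : ∀ (k : ℕ) (u w : g), w ∈ D k → ⁅u, w⁆ ∈ D (k + 1) := by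
    intro k u w hw
    rw [hmemD] at hw ⊢
    rw [LieModule.lowerCentralSeries_succ]
    exact LieSubmodule.lie_mem_lie (LieSubmodule.mem_top u) hw
  -- strict decrease of finrank along the series
  have hlt : ∀ k, k ≤ n - 2 →
      Module.finrank ℝ (D (k + 1)) < Module.finrank ℝ (D k) := by
    intro k hk
    have h1 : LieModule.lowerCentralSeries ℝ g g (k + 1) ≤ LieModule.lowerCentralSeries ℝ g g k :=
      hanti (Nat.le_succ k)
    have h2 : LieModule.lowerCentralSeries ℝ g g (k + 1) ≠ LieModule.lowerCentralSeries ℝ g g k := by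
      intro he
      exact hne k hk (hstab k (he ▸ le_rfl))
    refine Submodule.finrank_lt_finrank_of_lt (lt_of_le_of_ne ?_ ?_)
    · exact (LieSubmodule.toSubmodule_le_toSubmodule _ _).mpr h1
    · intro he
      exact h2 (LieSubmodule.toSubmodule_injective he)
  have hchain : ∀ (j a : ℕ), a + j ≤ n - 2 →
      Module.finrank ℝ (D (a + j)) + j ≤ Module.finrank ℝ (D a) := by
    intro j
    induction j with
    | zero => intro a _; simp
    | succ j ih =>
      intro a haj
      have h1 : a + j ≤ n - 2 := by omega
      have h2 := ih a h1
      have h3 := hlt (a + j) h1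
      rw [show a + (j + 1) = (a + j) + 1 from rfl]
      omega
  -- codimension-two lemma : finrank (D 1) + 2 ≤ n
  have hd1 : Module.finrank ℝ (D 1) + 2 ≤ n := by
    by_contra hcon
    push_neg at hcon
    have hne1 : LieModule.lowerCentralSeries ℝ g g 1 ≠ ⊥ := hne 1 (by omega)
    have hne0 : D 1 ≠ ⊤ := by
      intro he
      have htle : LieModule.lowerCentralSeries ℝ g g 0 ≤ LieModule.lowerCentralSeries ℝ g g 1 := by
        intro x _
        exact (hmemD 1 x).mp (by rw [he]; exact Submodule.mem_top)
      have h0 := hstab 0 htle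
      exact hne1 (le_bot_iff.mp (h0 ▸ hanti (Nat.zero_le 1)))
    have hflt : Module.finrank ℝ (D 1) < n := Submodule.finrank_lt hne0
    obtain ⟨x, hx⟩ : ∃ x : g, x ∉ D 1 := by
      by_contra h
      push_neg at h
      exact hne0 (eq_top_iff.mpr fun y _ => h y)
    have hsup : (ℝ ∙ x) ⊔ D 1 = ⊤ := by
      apply Submodule.eq_top_of_finrank_eq
      have h1 : D 1 < (ℝ ∙ x) ⊔ D 1 :=
        lt_of_le_of_ne le_sup_right
          (fun he => hx (he ▸ Submodule.mem_sup_left (Submodule.mem_span_singleton_self x)))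
      have h2 := Submodule.finrank_lt_finrank_of_lt h1
      have h3 : Module.finrank ℝ ((ℝ ∙ x) ⊔ D 1 : Submodule ℝ g) ≤ n := Submodule.finrank_le _
      omega
    have hle2 : LieModule.lowerCentralSeries ℝ g g 1 ≤ LieModule.lowerCentralSeries ℝ g g 2 := by
      have h1 : LieModule.lowerCentralSeries ℝ g g 1 =
          ⁅(⊤ : LieIdeal ℝ g), LieModule.lowerCentralSeries ℝ g g 0⁆ :=
        LieModule.lowerCentralSeries_succ ℝ g g 0
      rw [h1, LieSubmodule.lie_le_iff]
      intro a _ b _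
      have hb : b ∈ (ℝ ∙ x) ⊔ D 1 := hsup ▸ Submodule.mem_top
      have ha : a ∈ (ℝ ∙ x) ⊔ D 1 := hsup ▸ Submodule.mem_top
      obtain ⟨u, hu, b2, hb2, rfl⟩ := Submodule.mem_sup.mp hb
      obtain ⟨c2, rfl⟩ := Submodule.mem_span_singleton.mp hu
      obtain ⟨u', hu', a2, ha2, rfl⟩ := Submodule.mem_sup.mp ha
      obtain ⟨c1, rfl⟩ := Submodule.mem_span_singleton.mp hu'
      rw [← hmemD]
      have hxb2 : ⁅x, b2⁆ ∈ D 2 := hbr 1 x b2 hb2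
      have hxa2 : ⁅a2, x⁆ ∈ D 2 := by
        rw [← lie_skew]
        exact Submodule.neg_mem _ (hbr 1 x a2 ha2)
      have ha2b2 : ⁅a2, b2⁆ ∈ D 2 := hbr 1 a2 b2 hb2
      have hexp : ⁅c1 • x + a2, c2 • x + b2⁆ =
          c1 • ⁅x, b2⁆ + (c2 • ⁅a2, x⁆ + ⁅a2, b2⁆) := by
        simp only [add_lie, lie_add, smul_lie, lie_smul, lie_self, smul_zero, zero_add, add_zero,
          smul_add]
        abel
      rw [hexp]
      exact Submodule.add_mem _ (Submodule.smul_mem _ _ hxb2)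
        (Submodule.add_mem _ (Submodule.smul_mem _ _ hxa2) ha2b2)
    exact hne1 (hstab 1 hle2)
  -- exact dimensions
  have hdimlow : ∀ k, k ≤ n - 2 → n - 1 - k ≤ Module.finrank ℝ (D k) := by
    intro k hk
    have h1 := hchain (n - 2 - k) k (by omega)
    rw [show k + (n - 2 - k) = n - 2 from by omega] at h1
    have h2 : Module.finrank ℝ (D (n - 2)) ≠ 0 := by
      intro h0
      exact hne (n - 2) le_rfl
        ((LieSubmodule.toSubmodule_eq_bot _).mp (Submodule.finrank_eq_zero.mp h0))
    omega
  have hdim' : ∀ k, 1 ≤ k → k ≤ n - 2 → Module.finrank ℝ (D k) + k + 1 = n := by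
    intro k h1k hk
    have h1 := hchain (k - 1) 1 (by omega)
    rw [show 1 + (k - 1) = k from by omega] at h1
    have h2 := hdimlow k hk
    omega
  -- J is bijective ; comap J preserves finrank
  have hJcomp : J ∘ₗ (-J) = LinearMap.id := by
    ext v
    simp [hJ2 v]
  have hJcomp' : (-J) ∘ₗ J = LinearMap.id := by
    ext v
    simp [hJ2 v]
  set e : g ≃ₗ[ℝ] g := LinearEquiv.ofLinear J (-J) hJcomp hJcomp' with he
  have heJ : ∀ v : g, e v = J v := fun v => rfl
  have hcomapD : ∀ k, Module.finrank ℝ ((D k).comap J) = Module.finrank ℝ (D k) := by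
    intro k
    have h1 : (D k).comap J = (D k).comap (e : g →ₗ[ℝ] g) := rfl
    rw [h1, Submodule.comap_equiv_eq_map_symm, LinearEquiv.finrank_map_eq]
  -- the spaces W k
  set W : ℕ → Submodule ℝ g := fun k => D k ⊓ (D k).comap J with hW
  have hWmem : ∀ (k : ℕ) (v : g), v ∈ W k ↔ v ∈ D k ∧ J v ∈ D k := by
    intro k v
    rw [hW]
    simp [Submodule.mem_inf, Submodule.mem_comap]
  have hWJ : ∀ (k : ℕ) (v : g), v ∈ W k → J v ∈ W k := by
    intro k v hv
    rw [hWmem] at hv ⊢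
    refine ⟨hv.2, ?_⟩
    rw [hJ2 v]
    exact Submodule.neg_mem _ hv.1
  have hWanti : ∀ {a b : ℕ}, a ≤ b → W b ≤ W a := by
    intro a b h
    exact inf_le_inf (hDanti h) (Submodule.comap_mono (hDanti h))
  -- W 1 ≠ ⊥
  have hW1 : W 1 ≠ ⊥ := by
    have h1 := Submodule.finrank_sup_add_finrank_inf_eq (D 1) ((D 1).comap J)
    have h2 : Module.finrank ℝ (D 1 ⊔ (D 1).comap J : Submodule ℝ g) ≤ n := Submodule.finrank_le _
    have h3 := hcomapD 1
    have h4 := hdim' 1 le_rfl (by omega)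
    intro hbot
    have h5 : (D 1 ⊓ (D 1).comap J : Submodule ℝ g) = ⊥ := by simpa [hW] using hbot
    have h6 : Module.finrank ℝ (D 1 ⊓ (D 1).comap J : Submodule ℝ g) = 0 := by
      rw [h5]; exact finrank_bot ℝ g
    omega
  -- W (n-2) = ⊥ : the center is one-dimensional and J has no invariant line
  have hWtop : W (n - 2) = ⊥ := by
    rw [Submodule.eq_bot_iff]
    intro v hv
    by_contra hv0
    rw [hWmem] at hv
    have hd : Module.finrank ℝ (D (n - 2)) = 1 := by
      have := hdim' (n - 2) (by omega) le_rfl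
      omega
    have hspan : (ℝ ∙ v) = D (n - 2) := by
      apply Submodule.eq_of_le_of_finrank_le
      · rw [Submodule.span_singleton_le_iff_mem]; exact hv.1
      · rw [hd, finrank_span_singleton hv0]
    obtain ⟨c, hc⟩ := Submodule.mem_span_singleton.mp (hspan ▸ hv.2)
    have hJJ : J (J v) = (c * c) • v := by
      rw [← hc, map_smul, ← hc, smul_smul]
    rw [hJ2 v] at hJJ
    have hzero : (c * c + 1) • v = 0 := by
      rw [add_smul, one_smul, ← hJJ]
      abel
    have hcc : c * c + 1 ≠ 0 := by nlinarith [mul_self_nonneg c]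
    exact hv0 (by simpa [hcc] using (smul_eq_zero.mp hzero))
  -- the critical index K
  set S : Set ℕ := {k | 1 ≤ k ∧ W k ≠ ⊥} with hS
  have h1S : 1 ∈ S := ⟨le_rfl, hW1⟩
  have hSub : ∀ k ∈ S, k ≤ n - 3 := by
    intro k hk
    by_contra hk3
    have h1 : n - 2 ≤ k := by omega
    exact hk.2 (le_bot_iff.mp (hWtop ▸ hWanti h1))
  have hbdd : BddAbove S := ⟨n - 3, hSub⟩
  set K : ℕ := sSup S with hK
  have hKmem : K ∈ S := Nat.sSup_mem ⟨1, h1S⟩ hbdd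
  have hK1 : 1 ≤ K := hKmem.1
  have hKn : K ≤ n - 3 := hSub K hKmem
  have hWK : W K ≠ ⊥ := hKmem.2
  have hWK1 : W (K + 1) = ⊥ := by
    by_contra h
    have h1 : K + 1 ∈ S := ⟨by omega, h⟩
    have h2 := le_csSup hbdd h1
    omega
  -- choose y ∈ W K, y ∉ D (K+1)
  obtain ⟨y, hyW, hynot⟩ : ∃ y : g, y ∈ W K ∧ y ∉ D (K + 1) := by
    obtain ⟨y0, hy0W, hy0ne⟩ := Submodule.exists_mem_ne_zero_of_ne_bot hWK
    by_cases hy0 : y0 ∈ D (K + 1)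
    · refine ⟨J y0, hWJ K y0 hy0W, ?_⟩
      intro hmem
      have h1 : y0 ∈ W (K + 1) := by
        rw [hWmem]
        exact ⟨hy0, hmem⟩
      rw [hWK1] at h1
      exact hy0ne ((Submodule.mem_bot ℝ).mp h1)
    · exact ⟨y0, hy0W, hy0⟩
  have hyC : y ∈ D K := ((hWmem K y).mp hyW).1
  have hJyC : J y ∈ D K := ((hWmem K y).mp hyW).2
  -- the key relation : ⁅J x, y⁆ = -⁅x, J y⁆ for all x
  have hrel : ∀ x : g, ⁅J x, y⁆ = -⁅x, J y⁆ := by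
    intro x
    set p : g := ⁅J x, y⁆ + ⁅x, J y⁆ with hp
    have hq : ⁅x, y⁆ - ⁅J x, J y⁆ = -(J p) := by
      rw [hp, map_add, hNij x y]
      abel
    have hpC : p ∈ D (K + 1) := Submodule.add_mem _ (hbr K _ y hyC) (hbr K _ (J y) hJyC)
    have hqC : ⁅x, y⁆ - ⁅J x, J y⁆ ∈ D (K + 1) :=
      Submodule.sub_mem _ (hbr K x y hyC) (hbr K (J x) (J y) hJyC)
    have hqW : ⁅x, y⁆ - ⁅J x, J y⁆ ∈ W (K + 1) := by
      rw [hWmem]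
      refine ⟨hqC, ?_⟩
      rw [hq, map_neg, hJ2 p, neg_neg]
      exact hpC
    rw [hWK1] at hqW
    have hq0 : ⁅x, y⁆ - ⁅J x, J y⁆ = 0 := (Submodule.mem_bot ℝ).mp hqW
    have hJp : J p = 0 := by
      rw [hq0] at hq
      exact neg_eq_zero.mp hq.symm
    have hp0 : p = 0 := by
      have h1 := congrArg J hJp
      rw [hJ2 p, map_zero] at h1
      exact neg_eq_zero.mp h1
    exact eq_neg_of_add_eq_zero_left hp0
  -- D K = span y ⊔ D (K+1) and the scalar c with J y = c • y + v
  have hdK := hdim' K hK1 (by omega)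
  have hdK1 := hdim' (K + 1) (by omega) (by omega)
  have hDK : (ℝ ∙ y) ⊔ D (K + 1) = D K := by
    apply Submodule.eq_of_le_of_finrank_le
    · exact sup_le ((Submodule.span_singleton_le_iff_mem _ _).mpr hyC) (hDanti (Nat.le_succ K))
    · have h1 : D (K + 1) < (ℝ ∙ y) ⊔ D (K + 1) :=
        lt_of_le_of_ne le_sup_right
          (fun heq => hynot (heq ▸ Submodule.mem_sup_left (Submodule.mem_span_singleton_self y)))
      have h2 := Submodule.finrank_lt_finrank_of_lt h1
      omega
  obtain ⟨u, hu, v, hv, hJy⟩ := Submodule.mem_sup.mp (hDK ▸ hJyC)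
  obtain ⟨c, rfl⟩ := Submodule.mem_span_singleton.mp hu
  -- existence of x₀ with ⁅x₀, y⁆ ∉ D (K+2)
  obtain ⟨x0, hx0⟩ : ∃ x0 : g, ⁅x0, y⁆ ∉ D (K + 2) := by
    by_contra h
    push_neg at h
    have hle : LieModule.lowerCentralSeries ℝ g g (K + 1) ≤
        LieModule.lowerCentralSeries ℝ g g (K + 2) := by
      have h1 : LieModule.lowerCentralSeries ℝ g g (K + 1) =
          ⁅(⊤ : LieIdeal ℝ g), LieModule.lowerCentralSeries ℝ g g K⁆ :=
        LieModule.lowerCentralSeries_succ ℝ g g K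
      rw [h1, LieSubmodule.lie_le_iff]
      intro a _ m hm
      have hmD : m ∈ (ℝ ∙ y) ⊔ D (K + 1) := by
        rw [hDK, hmemD]
        exact hm
      obtain ⟨u', hu', w, hw, rfl⟩ := Submodule.mem_sup.mp hmD
      obtain ⟨c', rfl⟩ := Submodule.mem_span_singleton.mp hu'
      rw [← hmemD, lie_add, lie_smul]
      exact Submodule.add_mem _ (Submodule.smul_mem _ _ (h a)) (hbr (K + 1) a w hw)
    exact hne (K + 1) (by omega) (hstab (K + 1) hle)
  -- the contradiction
  have hdag : ∀ x : g, ⁅J x, y⁆ + c • ⁅x, y⁆ ∈ D (K + 2) := by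
    intro x
    have h1 : ⁅J x, y⁆ + c • ⁅x, y⁆ = -⁅x, v⁆ := by
      rw [hrel x, ← hJy, lie_add, lie_smul]
      abel
    rw [h1]
    exact Submodule.neg_mem _ (hbr (K + 1) x v hv)
  have h1 := hdag x0
  have h2 := hdag (J x0)
  rw [hJ2 x0, neg_lie] at h2
  have h3 : (-(1 + c * c)) • ⁅x0, y⁆ ∈ D (K + 2) := by
    have h4 := Submodule.sub_mem _ h2 (Submodule.smul_mem _ c h1)
    have h5 : (-⁅x0, y⁆ + c • ⁅J x0, y⁆) - c • (⁅J x0, y⁆ + c • ⁅x0, y⁆) =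
        (-(1 + c * c)) • ⁅x0, y⁆ := by
      rw [smul_add, neg_smul, add_smul, one_smul, smul_smul, neg_add]
      abel
    rwa [h5] at h4
  have hcne : (-(1 + c * c)) ≠ 0 := by nlinarith [mul_self_nonneg c]
  have h6 := Submodule.smul_mem _ (-(1 + c * c))⁻¹ h3
  rw [smul_smul, inv_mul_cancel₀ hcne, one_smul] at h6
  exact hx0 h6
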